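/- For every fixed integer I ≥ 1, the sequence S ↦ P(I,S) (viewed as a sequence of real numbers) converges to 0 as S → ∞. -/

import Mathlib

/-- `P I S` is the probability that a fixed clean mobile gets infected in the
Bluetooth malware model with `I` infected and `S` clean mobiles. -/
def P : ℕ → ℕ → ℚ
  | 0, _ => 0
  | _ + 1, 0 => 0
  | I + 1, S + 1 =>
      1 / ((I : ℚ) + S + 1) + ((S : ℚ) / ((I : ℚ) + S + 1)) * P I S +
        ((I : ℚ) / ((I : ℚ) + S + 1)) * P (I - 1) (S + 1)
  termination_by I _ => I
lemma P_bounds (I : ℕ) : ∀ S : ℕ, 0 ≤ P I S ∧ P I S ≤ 4 ^ I / ((S : ℚ) + 1) := by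
  induction I using Nat.strong_induction_on with
  | _ I ih =>
    intro S
    match I, S with
    | 0, S => simp only [P]; exact ⟨le_refl 0, by positivity⟩
    | I + 1, 0 =>
      constructor
      · simp [P]
      · simp only [P]; positivity
    | I + 1, S + 1 =>
      have hN : (0:ℚ) < (I:ℚ) + S + 1 := by positivity
      obtain ⟨h1a, h1b⟩ := ih I (by omega) S
      obtain ⟨h2a, h2b⟩ := ih (I - 1) (by omega) (S + 1)
      have hcast : ((S + 1 : ℕ) : ℚ) + 1 = (S : ℚ) + 2 := by push_cast; ring
      rw [hcast] at h2b
      have h4pos : (0:ℚ) < 4 ^ I := by positivity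
      have h4m : (0:ℚ) < 4 ^ (I - 1) := by positivity
      rw [P]
      constructor
      · have := mul_nonneg (by positivity : (0:ℚ) ≤ (S:ℚ)/((I:ℚ)+S+1)) h1a
        have := mul_nonneg (by positivity : (0:ℚ) ≤ (I:ℚ)/((I:ℚ)+S+1)) h2a
        positivity
      · have hA : 1 / ((I:ℚ) + S + 1) ≤ 2 / ((S:ℚ) + 2) := by
          rw [div_le_div_iff₀ hN (by positivity)]
          nlinarith [Nat.cast_nonneg (α := ℚ) I, Nat.cast_nonneg (α := ℚ) S]
        have hB : ((S:ℚ) / ((I:ℚ) + S + 1)) * P I S ≤ 4 ^ I / ((S:ℚ) + 2) := by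
          calc ((S:ℚ) / ((I:ℚ) + S + 1)) * P I S
              ≤ ((S:ℚ) / ((I:ℚ) + S + 1)) * (4 ^ I / ((S:ℚ) + 1)) :=
                mul_le_mul_of_nonneg_left h1b (by positivity)
            _ ≤ 4 ^ I / ((S:ℚ) + 2) := by
                rw [div_mul_div_comm, div_le_div_iff₀ (by positivity) (by positivity)]
                have key : (S:ℚ) * ((S:ℚ) + 2) ≤ ((I:ℚ) + S + 1) * ((S:ℚ) + 1) := by
                  nlinarith [Nat.cast_nonneg (α := ℚ) I, Nat.cast_nonneg (α := ℚ) S]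
                nlinarith [mul_le_mul_of_nonneg_left key h4pos.le]
        have hC : ((I:ℚ) / ((I:ℚ) + S + 1)) * P (I - 1) (S + 1)
            ≤ 4 ^ (I - 1) / ((S:ℚ) + 2) := by
          calc ((I:ℚ) / ((I:ℚ) + S + 1)) * P (I - 1) (S + 1)
              ≤ ((I:ℚ) / ((I:ℚ) + S + 1)) * (4 ^ (I - 1) / ((S:ℚ) + 2)) :=
                mul_le_mul_of_nonneg_left h2b (by positivity)
            _ ≤ 1 * (4 ^ (I - 1) / ((S:ℚ) + 2)) := by
                apply mul_le_mul_of_nonneg_right _ (by positivity)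
                rw [div_le_one hN]
                nlinarith [Nat.cast_nonneg (α := ℚ) S]
            _ = 4 ^ (I - 1) / ((S:ℚ) + 2) := one_mul _
        have hpow : (4:ℚ) ^ (I - 1) ≤ 4 ^ I := by
          apply pow_le_pow_right₀ (by norm_num)
          omega
        have h1le : (1:ℚ) ≤ 4 ^ I := by
          exact_mod_cast Nat.one_le_pow I 4 (by norm_num)
        have hsum : 2 / ((S:ℚ) + 2) + 4 ^ I / ((S:ℚ) + 2) + 4 ^ (I - 1) / ((S:ℚ) + 2)
            ≤ 4 ^ (I + 1) / (((S + 1 : ℕ) : ℚ) + 1) := by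
          rw [hcast]
          rw [← add_div, ← add_div, div_le_div_iff₀ (by positivity) (by positivity)]
          ring_nf
          nlinarith [Nat.cast_nonneg (α := ℚ) S]
        linarith [hA, hB, hC]

/-- For fixed `I ≥ 1`, the infection probability tends to `0` as `S → ∞`. -/
theorem stmt_12 (I : ℕ) (hI : 1 ≤ I) :
    Filter.Tendsto (fun S : ℕ => ((P I S : ℚ) : ℝ)) Filter.atTop (nhds 0) := by
  have h0 : Filter.Tendsto (fun S : ℕ => (4:ℝ) ^ I * (1 / ((S : ℝ) + 1)))
      Filter.atTop (nhds ((4:ℝ) ^ I * 0)) :=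
    tendsto_one_div_add_atTop_nhds_zero_nat.const_mul _
  rw [mul_zero] at h0
  refine tendsto_of_tendsto_of_tendsto_of_le_of_le tendsto_const_nhds h0 ?_ ?_
  · intro S
    show (0:ℝ) ≤ ((P I S : ℚ) : ℝ)
    exact_mod_cast (P_bounds I S).1
  · intro S
    show ((P I S : ℚ) : ℝ) ≤ (4:ℝ) ^ I * (1 / ((S : ℝ) + 1))
    have := (P_bounds I S).2
    have h2 : ((P I S : ℚ) : ℝ) ≤ ((4 ^ I / ((S : ℚ) + 1) : ℚ) : ℝ) := by exact_mod_cast this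
    calc ((P I S : ℚ) : ℝ) ≤ ((4 ^ I / ((S : ℚ) + 1) : ℚ) : ℝ) := h2
      _ = (4:ℝ) ^ I * (1 / ((S : ℝ) + 1)) := by push_cast; ring
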